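/- (Agmon's inequality on the line) For every continuously differentiable function u : ℝ → ℝ such that u and its derivative u' are square integrable on ℝ and u(x) → 0 as x → ±∞, one has sup_{x ∈ ℝ} u(x)² ≤ ‖u‖_{L²(ℝ)} · ‖u'‖_{L²(ℝ)}; in particular ‖u‖_{L^∞(ℝ)} ≤ ‖u‖_{L²(ℝ)}^{1/2} ‖u'‖_{L²(ℝ)}^{1/2}. -/

import Mathlib

open MeasureTheory Filter

/-- Agmon's inequality on the line. -/
theorem agmon_inequality
    (u : ℝ → ℝ) (hu : ContDiff ℝ 1 u)
    (hu2 : Integrable (fun x => (u x) ^ 2))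
    (hu'2 : Integrable (fun x => (deriv u x) ^ 2))
    (htop : Tendsto u atTop (nhds 0)) (hbot : Tendsto u atBot (nhds 0)) :
    (⨆ x : ℝ, (u x) ^ 2) ≤
      Real.sqrt (∫ x, (u x) ^ 2) * Real.sqrt (∫ x, (deriv u x) ^ 2) ∧
    (⨆ x : ℝ, |u x|) ≤
      (Real.sqrt (∫ x, (u x) ^ 2)) ^ ((1 : ℝ) / 2) *
        (Real.sqrt (∫ x, (deriv u x) ^ 2)) ^ ((1 : ℝ) / 2) := by
  set A := Real.sqrt (∫ x, (u x) ^ 2) with hA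
  set B := Real.sqrt (∫ x, (deriv u x) ^ 2) with hB
  have hA0 : 0 ≤ A := Real.sqrt_nonneg _
  have hB0 : 0 ≤ B := Real.sqrt_nonneg _
  have hcu : Continuous u := hu.continuous
  have hcu' : Continuous (deriv u) := (hu.continuous_deriv le_rfl)
  have hd : ∀ x : ℝ, HasDerivAt u (deriv u x) x :=
    fun x => (hu.differentiable one_ne_zero x).hasDerivAt
  -- integrability of u * u'
  have huv : Integrable (fun x => u x * deriv u x) := by
    refine ((hu2.add hu'2).div_const 2).mono
      ((hcu.mul hcu').aestronglyMeasurable) (Filter.Eventually.of_forall fun x => ?_)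
    have h1 : |u x * deriv u x| ≤ (u x ^ 2 + deriv u x ^ 2) / 2 := by
      rw [abs_mul]
      nlinarith [sq_nonneg (|u x| - |deriv u x|), sq_abs (u x), sq_abs (deriv u x),
        abs_nonneg (u x), abs_nonneg (deriv u x)]
    have h2 : 0 ≤ (u x ^ 2 + deriv u x ^ 2) / 2 := by positivity
    simp only [Pi.add_apply, Real.norm_eq_abs]
    rw [abs_of_nonneg h2]
    exact h1
  -- Cauchy–Schwarz
  have hCS : ∫ x, |u x * deriv u x| ≤ A * B := by
    have hmemf : MemLp (fun x => |u x|) (ENNReal.ofReal 2) (volume : Measure ℝ) := by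
      rw [show ENNReal.ofReal 2 = 2 by norm_num]
      refine (memLp_two_iff_integrable_sq hcu.abs.aestronglyMeasurable).2 ?_
      simpa [sq_abs] using hu2
    have hmemg : MemLp (fun x => |deriv u x|) (ENNReal.ofReal 2) (volume : Measure ℝ) := by
      rw [show ENNReal.ofReal 2 = 2 by norm_num]
      refine (memLp_two_iff_integrable_sq hcu'.abs.aestronglyMeasurable).2 ?_
      simpa [sq_abs] using hu'2
    have h := integral_mul_le_Lp_mul_Lq_of_nonneg (Real.holderConjugate_iff_eq_conjExponent
        (by norm_num) |>.2 (by norm_num))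
      (Filter.Eventually.of_forall fun x => abs_nonneg (u x))
      (Filter.Eventually.of_forall fun x => abs_nonneg (deriv u x)) hmemf hmemg
    have e1 : (∫ x, |u x| ^ (2 : ℝ)) = ∫ x, (u x) ^ 2 := by
      refine integral_congr_ae (Filter.Eventually.of_forall fun x => ?_)
      dsimp only
      rw [show ((2 : ℝ)) = ((2 : ℕ) : ℝ) by norm_num, Real.rpow_natCast, sq_abs]
    have e2 : (∫ x, |deriv u x| ^ (2 : ℝ)) = ∫ x, (deriv u x) ^ 2 := by
      refine integral_congr_ae (Filter.Eventually.of_forall fun x => ?_)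
      dsimp only
      rw [show ((2 : ℝ)) = ((2 : ℕ) : ℝ) by norm_num, Real.rpow_natCast, sq_abs]
    rw [e1, e2] at h
    have hi1 : (0:ℝ) ≤ ∫ x, (u x) ^ 2 := integral_nonneg fun x => sq_nonneg _
    have hi2 : (0:ℝ) ≤ ∫ x, (deriv u x) ^ 2 := integral_nonneg fun x => sq_nonneg _
    calc ∫ x, |u x * deriv u x| = ∫ x, |u x| * |deriv u x| := by
          simp [abs_mul]
      _ ≤ (∫ x, (u x) ^ 2) ^ ((1:ℝ)/2) * (∫ x, (deriv u x) ^ 2) ^ ((1:ℝ)/2) := h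
      _ = A * B := by
          rw [hA, hB, Real.sqrt_eq_rpow, Real.sqrt_eq_rpow]
  -- pointwise bound
  have key : ∀ x : ℝ, u x ^ 2 ≤ A * B := by
    intro x
    have hdsq : ∀ t : ℝ, HasDerivAt (fun y => u y ^ 2) (2 * (u t * deriv u t)) t := by
      intro t
      have := (hd t).fun_pow 2
      simpa [mul_comm, mul_assoc, mul_left_comm] using this
    have hgint : Integrable (fun t => 2 * (u t * deriv u t)) := huv.const_mul 2
    have htop2 : Tendsto (fun y => u y ^ 2) atTop (nhds 0) := by
      simpa using htop.pow 2
    have hbot2 : Tendsto (fun y => u y ^ 2) atBot (nhds 0) := by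
      simpa using hbot.pow 2
    have hIic : ∫ t in Set.Iic x, 2 * (u t * deriv u t) = u x ^ 2 - 0 :=
      MeasureTheory.integral_Iic_of_hasDerivAt_of_tendsto' (fun t _ => hdsq t)
        hgint.integrableOn hbot2
    have hIoi : ∫ t in Set.Ioi x, 2 * (u t * deriv u t) = 0 - u x ^ 2 :=
      MeasureTheory.integral_Ioi_of_hasDerivAt_of_tendsto' (fun t _ => hdsq t)
        hgint.integrableOn htop2
    have habs : Integrable (fun t => |2 * (u t * deriv u t)|) := hgint.abs
    have h1 : ∫ t in Set.Iic x, 2 * (u t * deriv u t) ≤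
        ∫ t in Set.Iic x, |2 * (u t * deriv u t)| :=
      integral_mono hgint.integrableOn habs.integrableOn fun t => le_abs_self _
    have h2 : -(∫ t in Set.Ioi x, 2 * (u t * deriv u t)) ≤
        ∫ t in Set.Ioi x, |2 * (u t * deriv u t)| := by
      rw [← integral_neg]
      exact integral_mono hgint.integrableOn.neg habs.integrableOn fun t =>
        (neg_le_abs _)
    have hsplit : (∫ t in Set.Iic x, |2 * (u t * deriv u t)|) +
        (∫ t in Set.Ioi x, |2 * (u t * deriv u t)|) = ∫ t, |2 * (u t * deriv u t)| :=
      intervalIntegral.integral_Iic_add_Ioi habs.integrableOn habs.integrableOn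
    have htotal : (∫ t, |2 * (u t * deriv u t)|) = 2 * ∫ t, |u t * deriv u t| := by
      rw [← integral_const_mul]
      refine integral_congr_ae (Filter.Eventually.of_forall fun t => ?_)
      dsimp only
      rw [abs_mul]
      norm_num
    nlinarith [hCS]
  constructor
  · exact ciSup_le fun x => key x
  · have hsq : Real.sqrt (A * B) = A ^ ((1:ℝ)/2) * B ^ ((1:ℝ)/2) := by
      rw [Real.sqrt_mul hA0, Real.sqrt_eq_rpow, Real.sqrt_eq_rpow]
    refine ciSup_le fun x => ?_
    rw [← hsq]
    calc |u x| = Real.sqrt (u x ^ 2) := (Real.sqrt_sq_eq_abs _).symm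
      _ ≤ Real.sqrt (A * B) := Real.sqrt_le_sqrt (key x)
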